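/- Let φ_1,…,φ_n be Lebesgue-measurable functions on [0,1) with A_k ≤ φ_k(x) ≤ B_k for all x, where A_k < 0 < B_k, let 𝔐 be an arbitrary family of nonempty subsets of {1,…,n}, and let μ = μ(φ,𝔐) be the multiplicative error of φ over 𝔐 (with integrals over [0,1)). Then there exist Lebesgue-measurable functions φ̃_1,…,φ̃_n on [0,1+μ) such that φ̃_k(x) = φ_k(x) for x ∈ [0,1), A_k ≤ φ̃_k(x) ≤ B_k for all x ∈ [0,1+μ), each φ̃_k restricted to [1,1+μ) is a step function, and ∫_0^{1+μ} ∏_{j∈S} φ̃_j(x) dx = 0 for every S ∈ 𝔐. -/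

import Mathlib

open MeasureTheory

/-- `f` is a step function on `[a, b)`: on `[a, b)` it coincides with a finite linear
combination of indicator functions of subintervals `[α, β) ⊆ [a, b)`. -/
def IsStepOn (f : ℝ → ℝ) (a b : ℝ) : Prop :=
  ∃ (m : ℕ) (c α β : Fin m → ℝ),
    (∀ i, a ≤ α i ∧ β i ≤ b) ∧
    ∀ x ∈ Set.Ico a b,
      f x = ∑ i, c i * (Set.Ico (α i) (β i)).indicator (fun _ => (1 : ℝ)) x

/-- The multiplicative error `μ(φ, 𝔐)` of a system of functions on `[0, 1)` over a family
`𝔐` of index sets, with integrals taken over `[0, 1)` with respect to Lebesgue measure. -/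
noncomputable def multErrorFam {n : ℕ} (𝔐 : Finset (Finset (Fin n)))
    (A B : Fin n → ℝ) (φ : Fin n → ℝ → ℝ) : ℝ :=
  ∑ S ∈ 𝔐, (∏ j ∈ S, min (-(A j)) (B j))⁻¹ *
    |∫ x in Set.Ico (0 : ℝ) 1, ∏ j ∈ S, φ j x|


open MeasureTheory

namespace Stmt7

variable {α : Type*}

/-- Lay out a list of (length, value) pairs consecutively starting at `a`. -/
noncomputable def place (d : α) : List (ℝ × α) → ℝ → ℝ → α
  | [], _, _ => d
  | p :: P, a, x => if x < a + p.1 then p.2 else place d P (a + p.1) x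

def total (P : List (ℝ × α)) : ℝ := (P.map Prod.fst).sum

@[simp] lemma total_nil : total ([] : List (ℝ × α)) = 0 := rfl

@[simp] lemma total_cons (p : ℝ × α) (P : List (ℝ × α)) : total (p :: P) = p.1 + total P := by
  simp [total]

lemma total_nonneg {P : List (ℝ × α)} (h : ∀ p ∈ P, 0 ≤ p.1) : 0 ≤ total P := by
  induction P with
  | nil => simp
  | cons p P ih =>
    have h1 := h p (by simp)
    have h2 := ih fun q hq => h q (by simp [hq])
    simp only [total_cons]; linarith

lemma place_cons (d : α) (a : ℝ) (p : ℝ × α) (P : List (ℝ × α)) (x : ℝ) :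
    place d (p :: P) a x = if x < a + p.1 then p.2 else place d P (a + p.1) x := rfl

lemma measurable_place [MeasurableSpace α] (d : α) (P : List (ℝ × α)) :
    ∀ a : ℝ, Measurable (place d P a) := by
  induction P with
  | nil => exact fun a => measurable_const
  | cons p P ih =>
    intro a
    have : place d (p :: P) a = fun x => if x < a + p.1 then p.2 else place d P (a + p.1) x := rfl
    rw [this]
    exact Measurable.ite measurableSet_Iio measurable_const (ih _)

lemma place_bound (Q : α → Prop) (d : α) (hd : Q d) :
    ∀ (P : List (ℝ × α)), (∀ p ∈ P, Q p.2) → ∀ (a x : ℝ), Q (place d P a x) := by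
  intro P
  induction P with
  | nil => intro _ a x; exact hd
  | cons p P ih =>
    intro h a x
    rw [place_cons]
    split
    · exact h p (by simp)
    · exact ih (fun q hq => h q (by simp [hq])) _ _

lemma sum_map_flatMap {β γ : Type*} (l : List β) (f : β → List γ) (g : γ → ℝ) :
    ((l.flatMap f).map g).sum = (l.map fun a => ((f a).map g).sum).sum := by
  induction l with
  | nil => simp
  | cons a l ih => simp [ih]

lemma place_integral (d : α) (g : α → ℝ) :
    ∀ (P : List (ℝ × α)), (∀ p ∈ P, 0 ≤ p.1) → ∀ a : ℝ,
      IntegrableOn (fun x => g (place d P a x)) (Set.Ico a (a + total P)) volume ∧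
      ∫ x in Set.Ico a (a + total P), g (place d P a x) =
        (P.map fun p => p.1 * g p.2).sum := by
  intro P
  induction P with
  | nil =>
    intro _ a
    constructor
    · rw [total_nil, add_zero, Set.Ico_self]; exact integrableOn_empty
    · rw [total_nil, add_zero, Set.Ico_self]; simp
  | cons p P ih =>
    intro hP a
    have hp1 : 0 ≤ p.1 := hP p (by simp)
    have hP' : ∀ q ∈ P, 0 ≤ q.1 := fun q hq => hP q (by simp [hq])
    have hPt : 0 ≤ total P := total_nonneg hP'
    obtain ⟨ihInt, ihEq⟩ := ih hP' (a + p.1)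
    have hassoc : a + total (p :: P) = (a + p.1) + total P := by rw [total_cons]; ring
    have hsplit : Set.Ico a (a + total (p :: P)) =
        Set.Ico a (a + p.1) ∪ Set.Ico (a + p.1) ((a + p.1) + total P) := by
      rw [hassoc, Set.Ico_union_Ico_eq_Ico (by linarith) (by linarith)]
    have e1 : Set.EqOn (fun _ => g p.2) (fun x => g (place d (p :: P) a x))
        (Set.Ico a (a + p.1)) := by
      intro x hx
      simp only [place_cons, if_pos hx.2]
    have e2 : Set.EqOn (fun x => g (place d P (a + p.1) x)) (fun x => g (place d (p :: P) a x))
        (Set.Ico (a + p.1) ((a + p.1) + total P)) := by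
      intro x hx
      simp only [place_cons, if_neg (not_lt.2 hx.1)]
    have i1 : IntegrableOn (fun x => g (place d (p :: P) a x)) (Set.Ico a (a + p.1)) volume := by
      refine IntegrableOn.congr_fun ?_ e1 measurableSet_Ico
      exact integrableOn_const measure_Ico_lt_top.ne
    have i2 : IntegrableOn (fun x => g (place d (p :: P) a x))
        (Set.Ico (a + p.1) ((a + p.1) + total P)) volume :=
      IntegrableOn.congr_fun ihInt e2 measurableSet_Ico
    constructor
    · rw [hsplit]; exact i1.union i2
    · rw [hsplit, setIntegral_union (Set.Ico_disjoint_Ico_same) measurableSet_Ico i1 i2]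
      have v1 : ∫ x in Set.Ico a (a + p.1), g (place d (p :: P) a x) = p.1 * g p.2 := by
        rw [← setIntegral_congr_fun measurableSet_Ico e1, setIntegral_const]
        rw [measureReal_def, Real.volume_Ico]
        rw [ENNReal.toReal_ofReal (by linarith), smul_eq_mul]
        ring
      have v2 : ∫ x in Set.Ico (a + p.1) ((a + p.1) + total P), g (place d (p :: P) a x) =
          (P.map fun q => q.1 * g q.2).sum := by
        rw [← setIntegral_congr_fun measurableSet_Ico e2, ihEq]
      rw [v1, v2, List.map_cons, List.sum_cons]

lemma place_isStepOn (d : α) (π : α → ℝ) :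
    ∀ (P : List (ℝ × α)), (∀ p ∈ P, 0 ≤ p.1) → ∀ a : ℝ,
      IsStepOn (fun x => π (place d P a x)) a (a + total P) := by
  intro P
  unfold IsStepOn
  induction P with
  | nil =>
    intro _ a
    refine ⟨0, Fin.elim0, Fin.elim0, Fin.elim0, fun i => i.elim0, fun x hx => ?_⟩
    rw [total_nil, add_zero] at hx
    exact absurd hx.2 (not_lt.2 hx.1)
  | cons p P ih =>
    intro hP a
    have hp1 : 0 ≤ p.1 := hP p (by simp)
    have hP' : ∀ q ∈ P, 0 ≤ q.1 := fun q hq => hP q (by simp [hq])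
    have hPt : 0 ≤ total P := total_nonneg hP'
    obtain ⟨m, c, γ, δ, hbd, hrep⟩ := ih hP' (a + p.1)
    refine ⟨m + 1, Fin.cons (π p.2) c, Fin.cons a γ, Fin.cons (a + p.1) δ, ?_, ?_⟩
    · intro i
      refine Fin.cases ?_ ?_ i
      · simp only [Fin.cons_zero, total_cons]
        constructor
        · exact le_refl a
        · linarith
      · intro i
        simp only [Fin.cons_succ, total_cons]
        have := hbd i
        constructor
        · linarith [this.1]
        · linarith [this.2]
    · intro x hx
      rw [total_cons] at hx
      rw [Fin.sum_univ_succ]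
      simp only [Fin.cons_zero, Fin.cons_succ]
      by_cases hlt : x < a + p.1
      · rw [place_cons, if_pos hlt]
        have hmem : x ∈ Set.Ico a (a + p.1) := ⟨hx.1, hlt⟩
        rw [Set.indicator_of_mem hmem]
        have hz : ∀ i : Fin m, c i * (Set.Ico (γ i) (δ i)).indicator (fun _ => (1:ℝ)) x = 0 := by
          intro i
          rw [Set.indicator_of_notMem, mul_zero]
          intro hmem
          exact absurd (le_trans (hbd i).1 hmem.1) (not_le.2 hlt)
        rw [Finset.sum_congr rfl fun i _ => hz i]
        simp
      · rw [place_cons, if_neg hlt]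
        rw [Set.indicator_of_notMem (fun hmem => hlt hmem.2), mul_zero, zero_add]
        exact hrep x ⟨not_lt.1 hlt, by linarith [hx.2]⟩

/-! Walsh-type signs -/

def chi (t : Bool) : ℝ := if t then -1 else 1

@[simp] lemma chi_mul_self (t : Bool) : chi t * chi t = 1 := by cases t <;> norm_num [chi]

@[simp] lemma abs_chi (t : Bool) : |chi t| = 1 := by cases t <;> norm_num [chi]

lemma sum_prod_chi {n : ℕ} {T : Finset (Fin n)} (hT : T.Nonempty) :
    ∑ b : Fin n → Bool, ∏ i ∈ T, chi (b i) = 0 := by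
  classical
  obtain ⟨i0, hi0⟩ := hT
  have hinv : Function.Involutive (fun b : Fin n → Bool => Function.update b i0 (!b i0)) := by
    intro b
    funext i
    by_cases h : i = i0
    · subst h; simp
    · simp [Function.update_of_ne h]
  have key : ∀ b : Fin n → Bool,
      ∏ i ∈ T, chi (Function.update b i0 (!b i0) i) = -∏ i ∈ T, chi (b i) := by
    intro b
    rw [← Finset.mul_prod_erase T (fun i => chi (Function.update b i0 (!b i0) i)) hi0,
        ← Finset.mul_prod_erase T (fun i => chi (b i)) hi0]
    have h1 : chi (Function.update b i0 (!b i0) i0) = -chi (b i0) := by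
      rw [Function.update_self]; cases b i0 <;> norm_num [chi]
    have h2 : ∏ i ∈ T.erase i0, chi (Function.update b i0 (!b i0) i) =
        ∏ i ∈ T.erase i0, chi (b i) :=
      Finset.prod_congr rfl fun i hi => by rw [Function.update_of_ne (Finset.ne_of_mem_erase hi)]
    rw [h1, h2]; ring
  have := Equiv.sum_comp (hinv.toPerm _) (fun b : Fin n → Bool => ∏ i ∈ T, chi (b i))
  have h2 : ∑ b : Fin n → Bool, ∏ i ∈ T, chi ((hinv.toPerm _) b i) =
      -∑ b : Fin n → Bool, ∏ i ∈ T, chi (b i) := by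
    rw [← Finset.sum_neg_distrib]
    exact Finset.sum_congr rfl fun b _ => key b
  rw [h2] at this
  linarith

lemma prod_chi_symmDiff {n : ℕ} (b : Fin n → Bool) (U V : Finset (Fin n)) :
    (∏ i ∈ U, chi (b i)) * ∏ i ∈ V, chi (b i) = ∏ i ∈ symmDiff U V, chi (b i) := by
  classical
  have hU : (∏ i ∈ U \ V, chi (b i)) * ∏ i ∈ U ∩ V, chi (b i) = ∏ i ∈ U, chi (b i) := by
    rw [← Finset.sdiff_inter_self_left U V]
    exact Finset.prod_sdiff (Finset.inter_subset_left)
  have hV : (∏ i ∈ V \ U, chi (b i)) * ∏ i ∈ U ∩ V, chi (b i) = ∏ i ∈ V, chi (b i) := by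
    rw [Finset.inter_comm, ← Finset.sdiff_inter_self_left V U]
    exact Finset.prod_sdiff (Finset.inter_subset_left)
  have hsq : (∏ i ∈ U ∩ V, chi (b i)) * ∏ i ∈ U ∩ V, chi (b i) = 1 := by
    rw [← Finset.prod_mul_distrib]
    exact Finset.prod_eq_one fun i _ => chi_mul_self _
  have hsd : symmDiff U V = (U \ V) ∪ (V \ U) := by
    rw [symmDiff_def]; rfl
  rw [hsd, Finset.prod_union disjoint_sdiff_sdiff]
  rw [← hU, ← hV]
  calc (∏ i ∈ U \ V, chi (b i)) * (∏ i ∈ U ∩ V, chi (b i)) *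
        ((∏ i ∈ V \ U, chi (b i)) * ∏ i ∈ U ∩ V, chi (b i))
      = (∏ i ∈ U \ V, chi (b i)) * (∏ i ∈ V \ U, chi (b i)) *
        ((∏ i ∈ U ∩ V, chi (b i)) * ∏ i ∈ U ∩ V, chi (b i)) := by ring
    _ = (∏ i ∈ U \ V, chi (b i)) * ∏ i ∈ V \ U, chi (b i) := by rw [hsq, mul_one]

lemma real_sign_mul_abs (x : ℝ) : Real.sign x * |x| = x := by
  rcases lt_trichotomy x 0 with h | h | h
  · rw [Real.sign_of_neg h, abs_of_neg h]; ring
  · simp [h]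
  · rw [Real.sign_of_pos h, abs_of_pos h]; ring

end Stmt7

theorem stmt_7 (n : ℕ) (A B : Fin n → ℝ) (hA : ∀ k, A k < 0) (hB : ∀ k, 0 < B k)
    (φ : Fin n → ℝ → ℝ) (hφm : ∀ k, Measurable (φ k))
    (hφb : ∀ k, ∀ x ∈ Set.Ico (0 : ℝ) 1, A k ≤ φ k x ∧ φ k x ≤ B k)
    (𝔐 : Finset (Finset (Fin n))) (h𝔐 : ∀ S ∈ 𝔐, S.Nonempty) :
    ∃ ψ : Fin n → ℝ → ℝ,
      (∀ k, Measurable (ψ k)) ∧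
      (∀ k, ∀ x ∈ Set.Ico (0 : ℝ) 1, ψ k x = φ k x) ∧
      (∀ k, ∀ x ∈ Set.Ico (0 : ℝ) (1 + multErrorFam 𝔐 A B φ),
        A k ≤ ψ k x ∧ ψ k x ≤ B k) ∧
      (∀ k, IsStepOn (ψ k) 1 (1 + multErrorFam 𝔐 A B φ)) ∧
      ∀ S ∈ 𝔐, ∫ x in Set.Ico (0 : ℝ) (1 + multErrorFam 𝔐 A B φ), ∏ j ∈ S, ψ j x = 0 := by
  classical
  set C : Fin n → ℝ := fun j => min (-(A j)) (B j) with hCdef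
  have hCpos : ∀ j, 0 < C j := fun j => lt_min (by linarith [hA j]) (hB j)
  have hCA : ∀ j, A j ≤ -C j := fun j => by
    have := min_le_left (-(A j)) (B j); simp only [hCdef]; linarith
  have hCB : ∀ j, C j ≤ B j := fun j => min_le_right _ _
  set t : Finset (Fin n) → ℝ := fun S => ∫ x in Set.Ico (0:ℝ) 1, ∏ j ∈ S, φ j x with htdef
  set μ1 : Finset (Fin n) → ℝ := fun S => (∏ j ∈ S, C j)⁻¹ * |t S| with hμ1def
  have hμ1nn : ∀ S, 0 ≤ μ1 S := fun S =>
    mul_nonneg (inv_nonneg.2 (Finset.prod_nonneg fun j _ => (hCpos j).le)) (abs_nonneg _)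
  have hμeq : multErrorFam 𝔐 A B φ = ∑ S ∈ 𝔐, μ1 S := rfl
  have hμnn : 0 ≤ multErrorFam 𝔐 A B φ := by
    rw [hμeq]; exact Finset.sum_nonneg fun S _ => hμ1nn S
  -- pivot element of each member of 𝔐
  set j0 : {x // x ∈ 𝔐} → Fin n := fun S' => (h𝔐 S'.1 S'.2).choose with hj0def
  have hj0 : ∀ S', j0 S' ∈ S'.1 := fun S' => (h𝔐 S'.1 S'.2).choose_spec
  -- the values on cells
  set val : {x // x ∈ 𝔐} → (Fin n → Bool) → (Fin n → ℝ) := fun S' b j =>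
    (if j = j0 S' then -Real.sign (t S'.1) else 1) * C j *
      ∏ i ∈ (if j = j0 S' then S'.1.erase (j0 S') else {j}), Stmt7.chi (b i) with hvaldef
  set P : List (ℝ × (Fin n → ℝ)) :=
    𝔐.attach.toList.flatMap (fun S' => (Finset.univ : Finset (Fin n → Bool)).toList.map
      (fun b => (μ1 S'.1 / 2 ^ n, val S' b))) with hPdef
  have hPmem : ∀ p ∈ P, ∃ S' : {x // x ∈ 𝔐}, ∃ b : Fin n → Bool,
      p = (μ1 S'.1 / 2 ^ n, val S' b) := by
    intro p hp
    rw [hPdef, List.mem_flatMap] at hp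
    obtain ⟨S', hS', hmem⟩ := hp
    rw [List.mem_map] at hmem
    obtain ⟨b, _, hb⟩ := hmem
    exact ⟨S', b, hb.symm⟩
  have hPlen : ∀ p ∈ P, 0 ≤ p.1 := by
    intro p hp
    obtain ⟨S', b, rfl⟩ := hPmem p hp
    exact div_nonneg (hμ1nn _) (by positivity)
  have hPval : ∀ (S' : {x // x ∈ 𝔐}) (b : Fin n → Bool) (k : Fin n),
      A k ≤ val S' b k ∧ val S' b k ≤ B k := by
    intro S' b k
    have habs : |val S' b k| ≤ C k := by
      simp only [hvaldef]
      rw [abs_mul, abs_mul]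
      have h1 : |if k = j0 S' then -Real.sign (t S'.1) else 1| ≤ 1 := by
        split
        · rw [abs_neg]
          rcases Real.sign_apply_eq (t S'.1) with h | h | h <;> rw [h] <;> norm_num
        · norm_num
      have h2 : |∏ i ∈ (if k = j0 S' then S'.1.erase (j0 S') else {k}), Stmt7.chi (b i)| = 1 := by
        rw [Finset.abs_prod]
        exact Finset.prod_eq_one fun i _ => Stmt7.abs_chi _
      rw [h2, mul_one, abs_of_pos (hCpos k)]
      calc |if k = j0 S' then -Real.sign (t S'.1) else 1| * C k ≤ 1 * C k :=
            mul_le_mul_of_nonneg_right h1 (hCpos k).le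
        _ = C k := one_mul _
    have := abs_le.1 habs
    exact ⟨le_trans (hCA k) (by linarith [this.1]), le_trans this.2 (hCB k)⟩
  have hcard : (Fintype.card (Fin n → Bool) : ℝ) = 2 ^ n := by
    rw [Fintype.card_fun]; simp
  have hTot : Stmt7.total P = multErrorFam 𝔐 A B φ := by
    rw [hPdef, Stmt7.total, Stmt7.sum_map_flatMap, hμeq, ← Finset.sum_attach 𝔐 μ1,
      Finset.sum_map_toList]
    refine Finset.sum_congr rfl fun S' _ => ?_
    rw [List.map_map]
    have : (Prod.fst ∘ fun b : Fin n → Bool => (μ1 S'.1 / 2 ^ n, val S' b)) =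
        fun _ => μ1 S'.1 / 2 ^ n := rfl
    rw [this, Finset.sum_map_toList, Finset.sum_const, nsmul_eq_mul, Finset.card_univ, hcard]
    field_simp
  -- the extension
  set ψ : Fin n → ℝ → ℝ :=
    fun k x => if x < 1 then φ k x else Stmt7.place 0 P 1 x k with hψdef
  have hψm : ∀ k, Measurable (ψ k) := by
    intro k
    exact Measurable.ite measurableSet_Iio (hφm k)
      ((measurable_pi_apply k).comp (Stmt7.measurable_place 0 P 1))
  have hψeq : ∀ k, ∀ x ∈ Set.Ico (0:ℝ) 1, ψ k x = φ k x := by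
    intro k x hx
    simp only [hψdef, if_pos hx.2]
  refine ⟨ψ, hψm, hψeq, ?_, ?_, ?_⟩
  · -- bounds
    intro k x hx
    by_cases h : x < 1
    · rw [hψeq k x ⟨hx.1, h⟩]; exact hφb k x ⟨hx.1, h⟩
    · have : ψ k x = Stmt7.place 0 P 1 x k := by simp only [hψdef, if_neg h]
      rw [this]
      refine Stmt7.place_bound (fun v => A k ≤ v k ∧ v k ≤ B k) 0
        ⟨(hA k).le, (hB k).le⟩ P ?_ 1 x
      intro p hp
      obtain ⟨S', b, rfl⟩ := hPmem p hp
      exact hPval S' b k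
  · -- step function on [1, 1+μ)
    intro k
    have h := Stmt7.place_isStepOn 0 (fun v => v k) P hPlen 1
    rw [hTot] at h
    obtain ⟨m, c, γ, δ, h1, h2⟩ := h
    refine ⟨m, c, γ, δ, h1, fun x hx => ?_⟩
    have : ψ k x = Stmt7.place 0 P 1 x k := by
      simp only [hψdef, if_neg (not_lt.2 hx.1)]
    rw [this]
    exact h2 x hx
  · -- integrals vanish
    intro S hS
    have hSne : S.Nonempty := h𝔐 S hS
    have hsplit : Set.Ico (0:ℝ) (1 + multErrorFam 𝔐 A B φ) =
        Set.Ico (0:ℝ) 1 ∪ Set.Ico (1:ℝ) (1 + multErrorFam 𝔐 A B φ) :=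
      (Set.Ico_union_Ico_eq_Ico (by norm_num) (by linarith)).symm
    have hEq1 : Set.EqOn (fun x => ∏ j ∈ S, φ j x) (fun x => ∏ j ∈ S, ψ j x)
        (Set.Ico (0:ℝ) 1) := fun x hx =>
      Finset.prod_congr rfl fun j _ => (hψeq j x hx).symm
    have hi1 : IntegrableOn (fun x => ∏ j ∈ S, ψ j x) (Set.Ico (0:ℝ) 1) volume := by
      refine IntegrableOn.congr_fun ?_ hEq1 measurableSet_Ico
      refine Measure.integrableOn_of_bounded (M := ∏ j ∈ S, max (B j) (-(A j)))
        (by simp [Real.volume_Ico]) ?_ ?_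
      · exact (Finset.measurable_prod S fun j _ => hφm j).aestronglyMeasurable
      · refine (ae_restrict_iff' measurableSet_Ico).2 (Filter.Eventually.of_forall ?_)
        intro x hx
        rw [Real.norm_eq_abs, Finset.abs_prod]
        refine Finset.prod_le_prod (fun j _ => abs_nonneg _) fun j _ => ?_
        have h := hφb j x hx
        rw [abs_le]
        constructor
        · have : -(max (B j) (-(A j))) ≤ A j := by
            have := le_max_right (B j) (-(A j)); linarith
          linarith [h.1]
        · exact le_trans h.2 (le_max_left _ _)
    have hI1 : ∫ x in Set.Ico (0:ℝ) 1, ∏ j ∈ S, ψ j x = t S := by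
      rw [← setIntegral_congr_fun measurableSet_Ico hEq1]
    obtain ⟨hi2', hI2'⟩ := Stmt7.place_integral 0 (fun v => ∏ j ∈ S, v j) P hPlen 1
    rw [hTot] at hi2' hI2'
    have hEq2 : Set.EqOn (fun x => ∏ j ∈ S, Stmt7.place 0 P 1 x j) (fun x => ∏ j ∈ S, ψ j x)
        (Set.Ico (1:ℝ) (1 + multErrorFam 𝔐 A B φ)) := by
      intro x hx
      refine Finset.prod_congr rfl fun j _ => ?_
      simp only [hψdef, if_neg (not_lt.2 hx.1)]
    have hi2 : IntegrableOn (fun x => ∏ j ∈ S, ψ j x)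
        (Set.Ico (1:ℝ) (1 + multErrorFam 𝔐 A B φ)) volume :=
      IntegrableOn.congr_fun hi2' hEq2 measurableSet_Ico
    have hI2 : ∫ x in Set.Ico (1:ℝ) (1 + multErrorFam 𝔐 A B φ), ∏ j ∈ S, ψ j x =
        (P.map fun p => p.1 * ∏ j ∈ S, p.2 j).sum := by
      rw [← setIntegral_congr_fun measurableSet_Ico hEq2, hI2']
    -- compute the list sum
    have hblock : ∀ S' : {x // x ∈ 𝔐},
        ∑ b : Fin n → Bool, μ1 S'.1 / 2 ^ n * ∏ j ∈ S, val S' b j =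
          if S'.1 = S then -(t S) else 0 := by
      intro S'
      have hj0' := hj0 S'
      by_cases hj0S : j0 S' ∈ S
      · -- pivot of S' belongs to S
        have hprodval : ∀ b : Fin n → Bool, ∏ j ∈ S, val S' b j =
            (-Real.sign (t S'.1)) * (∏ j ∈ S, C j) *
              ∏ i ∈ symmDiff (S'.1.erase (j0 S')) (S.erase (j0 S')), Stmt7.chi (b i) := by
          intro b
          simp only [hvaldef]
          rw [Finset.prod_mul_distrib, Finset.prod_mul_distrib]
          have hsign : ∏ j ∈ S, (if j = j0 S' then -Real.sign (t S'.1) else 1) =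
              -Real.sign (t S'.1) := by
            rw [Finset.prod_ite_eq' S (j0 S') (fun _ => -Real.sign (t S'.1)), if_pos hj0S]
          have hW : ∏ j ∈ S, (∏ i ∈ (if j = j0 S' then S'.1.erase (j0 S') else {j}),
              Stmt7.chi (b i)) =
              ∏ i ∈ symmDiff (S'.1.erase (j0 S')) (S.erase (j0 S')), Stmt7.chi (b i) := by
            rw [← Finset.mul_prod_erase S
              (fun j => ∏ i ∈ (if j = j0 S' then S'.1.erase (j0 S') else {j}), Stmt7.chi (b i))
              hj0S]
            rw [if_pos rfl]
            have h2 : ∏ j ∈ S.erase (j0 S'),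
                (∏ i ∈ (if j = j0 S' then S'.1.erase (j0 S') else {j}), Stmt7.chi (b i)) =
                ∏ j ∈ S.erase (j0 S'), Stmt7.chi (b j) :=
              Finset.prod_congr rfl fun j hj => by
                rw [if_neg (Finset.ne_of_mem_erase hj), Finset.prod_singleton]
            rw [h2, Stmt7.prod_chi_symmDiff]
          rw [hsign, hW]
        by_cases hSS : S'.1 = S
        · rw [if_pos hSS]
          have hsd : symmDiff (S'.1.erase (j0 S')) (S.erase (j0 S')) = ∅ := by
            rw [hSS, symmDiff_self]; rfl
          have hconst : ∀ b : Fin n → Bool, μ1 S'.1 / 2 ^ n * ∏ j ∈ S, val S' b j =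
              μ1 S / 2 ^ n * ((-Real.sign (t S)) * ∏ j ∈ S, C j) := by
            intro b
            rw [hprodval b, hsd, Finset.prod_empty, mul_one, hSS]
          rw [Finset.sum_congr rfl fun b _ => hconst b, Finset.sum_const, nsmul_eq_mul,
            Finset.card_univ, hcard]
          have hCprod : (0:ℝ) < ∏ j ∈ S, C j := Finset.prod_pos fun j _ => hCpos j
          have hsgn : Real.sign (t S) * |t S| = t S := Stmt7.real_sign_mul_abs _
          simp only [hμ1def]
          have h1 : (∏ j ∈ S, C j) * (∏ j ∈ S, C j)⁻¹ = 1 := mul_inv_cancel₀ hCprod.ne'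
          have h2 : (2:ℝ) ^ n * ((2:ℝ) ^ n)⁻¹ = 1 := mul_inv_cancel₀ (by positivity)
          calc (2:ℝ) ^ n * ((∏ j ∈ S, C j)⁻¹ * |t S| / 2 ^ n *
                (-Real.sign (t S) * ∏ j ∈ S, C j))
              = -((Real.sign (t S) * |t S|) * ((∏ j ∈ S, C j) * (∏ j ∈ S, C j)⁻¹) *
                  ((2:ℝ) ^ n * ((2:ℝ) ^ n)⁻¹)) := by ring
            _ = -(t S) := by rw [h1, h2, hsgn]; ring
        · rw [if_neg hSS]
          have hUV : S'.1.erase (j0 S') ≠ S.erase (j0 S') := by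
            intro h
            apply hSS
            have := congrArg (insert (j0 S')) h
            rwa [Finset.insert_erase hj0', Finset.insert_erase hj0S] at this
          have hne : (symmDiff (S'.1.erase (j0 S')) (S.erase (j0 S'))).Nonempty := by
            rw [Finset.nonempty_iff_ne_empty]
            intro h
            exact hUV (symmDiff_eq_bot.1 h)
          calc ∑ b : Fin n → Bool, μ1 S'.1 / 2 ^ n * ∏ j ∈ S, val S' b j
              = ∑ b : Fin n → Bool, (μ1 S'.1 / 2 ^ n * ((-Real.sign (t S'.1)) * ∏ j ∈ S, C j)) *
                ∏ i ∈ symmDiff (S'.1.erase (j0 S')) (S.erase (j0 S')), Stmt7.chi (b i) := by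
                refine Finset.sum_congr rfl fun b _ => ?_
                rw [hprodval b]; ring
            _ = (μ1 S'.1 / 2 ^ n * ((-Real.sign (t S'.1)) * ∏ j ∈ S, C j)) *
                ∑ b : Fin n → Bool,
                  ∏ i ∈ symmDiff (S'.1.erase (j0 S')) (S.erase (j0 S')), Stmt7.chi (b i) := by
                rw [Finset.mul_sum]
            _ = 0 := by rw [Stmt7.sum_prod_chi hne, mul_zero]
      · -- pivot of S' not in S, so S' ≠ S
        have hne : S'.1 ≠ S := fun h => hj0S (h ▸ hj0')
        rw [if_neg hne]
        have hprodval : ∀ b : Fin n → Bool, ∏ j ∈ S, val S' b j =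
            (∏ j ∈ S, C j) * ∏ i ∈ S, Stmt7.chi (b i) := by
          intro b
          simp only [hvaldef]
          rw [← Finset.prod_mul_distrib]
          refine Finset.prod_congr rfl fun j hj => ?_
          have hjne : j ≠ j0 S' := fun h => hj0S (h ▸ hj)
          rw [if_neg hjne, if_neg hjne, Finset.prod_singleton, one_mul]
        calc ∑ b : Fin n → Bool, μ1 S'.1 / 2 ^ n * ∏ j ∈ S, val S' b j
            = ∑ b : Fin n → Bool, (μ1 S'.1 / 2 ^ n * ∏ j ∈ S, C j) *
              ∏ i ∈ S, Stmt7.chi (b i) := by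
              refine Finset.sum_congr rfl fun b _ => ?_
              rw [hprodval b]; ring
          _ = (μ1 S'.1 / 2 ^ n * ∏ j ∈ S, C j) * ∑ b : Fin n → Bool, ∏ i ∈ S, Stmt7.chi (b i) := by
              rw [Finset.mul_sum]
          _ = 0 := by rw [Stmt7.sum_prod_chi hSne, mul_zero]
    have hsum : (P.map fun p => p.1 * ∏ j ∈ S, p.2 j).sum = -(t S) := by
      rw [hPdef, Stmt7.sum_map_flatMap]
      have hinner : ∀ S' : {x // x ∈ 𝔐},
          (((Finset.univ : Finset (Fin n → Bool)).toList.map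
            (fun b => (μ1 S'.1 / 2 ^ n, val S' b))).map
              (fun p : ℝ × (Fin n → ℝ) => p.1 * ∏ j ∈ S, p.2 j)).sum =
            if S'.1 = S then -(t S) else 0 := by
        intro S'
        rw [List.map_map]
        have : ((fun p : ℝ × (Fin n → ℝ) => p.1 * ∏ j ∈ S, p.2 j) ∘
            fun b : Fin n → Bool => (μ1 S'.1 / 2 ^ n, val S' b)) =
            fun b => μ1 S'.1 / 2 ^ n * ∏ j ∈ S, val S' b j := rfl
        rw [this, Finset.sum_map_toList]
        exact hblock S'
      rw [List.map_congr_left (fun S' _ => hinner S'), Finset.sum_map_toList]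
      have : ∑ S' ∈ 𝔐.attach, (if S'.1 = S then -(t S) else 0) =
          ∑ S'' ∈ 𝔐, (if S'' = S then -(t S) else 0) :=
        Finset.sum_attach 𝔐 (fun S'' => if S'' = S then -(t S) else 0)
      rw [this, Finset.sum_ite_eq' 𝔐 S (fun _ => -(t S)), if_pos hS]
    rw [hsplit, setIntegral_union (Set.Ico_disjoint_Ico_same) measurableSet_Ico hi1 hi2,
      hI1, hI2, hsum]
    ring
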